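/- arXiv:1206.3786 — 3 statements merged into one kernel-verified Lean document; each statement's English description precedes it below -/
import Mathlib

section
/- Let N ≥ 1, 1 ≤ k ≤ N, and let p_1,…,p_N, q_1,…,q_{N−ℓ} be complex numbers (0 ≤ ℓ ≤ N−1, with k ≤ N−ℓ) such that all the p_i are pairwise distinct, all the q_j are pairwise distinct, and p_i ≠ q_j for all i, j. Then the rational function identity Σ_{I ⊂ {1,…,N}, |I|=k} ∏_{m∈I, n∉I} 1/(p_n − p_m) · ∏_{m∈I} ∏_{n=1}^{N−ℓ} 1/(p_m − q_n) = Σ_{J ⊂ {1,…,N−ℓ}, |J|=k} ∏_{m∈J, n∉J} 1/(q_m − q_n) · ∏_{m∈J} ∏_{n=1}^{N} 1/(p_n − q_m) holds. -/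
open Finset

lemma pf_two {x a c : ℂ} (hxa : x ≠ a) (hxc : x ≠ c) (hca : c ≠ a) :
    (x - a)⁻¹ * (x - c)⁻¹ = (c - a)⁻¹ * ((x - c)⁻¹ - (x - a)⁻¹) := by
  have h1 : x - a ≠ 0 := sub_ne_zero.2 hxa
  have h2 : x - c ≠ 0 := sub_ne_zero.2 hxc
  have h3 : c - a ≠ 0 := sub_ne_zero.2 hca
  field_simp
  ring

lemma partial_fraction : ∀ (S : Finset ℂ), S.Nonempty → ∀ x ∉ S,
    ∏ c ∈ S, (x - c)⁻¹ = ∑ c ∈ S, (x - c)⁻¹ * ∏ d ∈ S.erase c, (c - d)⁻¹ := by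
  intro S
  induction S using Finset.induction_on with
  | empty => intro h; exact absurd rfl h.ne_empty
  | @insert a T haT ih =>
    intro _ x hx
    have hxa : x ≠ a := fun h => hx (h ▸ mem_insert_self a T)
    have hxT : x ∉ T := fun h => hx (mem_insert_of_mem h)
    rcases T.eq_empty_or_nonempty with rfl | hT
    · simp
    have haT' : a ∉ T := haT
    have key : ∀ y, y ∉ T → ∏ c ∈ T, (y - c)⁻¹
        = ∑ c ∈ T, (y - c)⁻¹ * ∏ d ∈ T.erase c, (c - d)⁻¹ := fun y hy => ih hT y hy
    rw [prod_insert haT, key x hxT, mul_sum]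
    rw [sum_insert haT]
    have e1 : ∀ c ∈ T, (x - a)⁻¹ * ((x - c)⁻¹ * ∏ d ∈ T.erase c, (c - d)⁻¹)
        = (x - c)⁻¹ * ((c - a)⁻¹ * ∏ d ∈ T.erase c, (c - d)⁻¹)
          - (x - a)⁻¹ * ((c - a)⁻¹ * ∏ d ∈ T.erase c, (c - d)⁻¹) := by
      intro c hc
      have hca : c ≠ a := fun h => haT (h ▸ hc)
      have hxc : x ≠ c := fun h => hxT (h ▸ hc)
      rw [← mul_assoc, pf_two hxa hxc hca]
      ring
    rw [sum_congr rfl e1, sum_sub_distrib, ← mul_sum]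
    have e2 : ∑ c ∈ T, (c - a)⁻¹ * ∏ d ∈ T.erase c, (c - d)⁻¹
        = - ∏ d ∈ T, (a - d)⁻¹ := by
      rw [key a haT']
      rw [← sum_neg_distrib]
      apply sum_congr rfl
      intro c hc
      have : (c - a)⁻¹ = -(a - c)⁻¹ := by rw [← inv_neg, neg_sub]
      rw [this]; ring
    rw [e2]
    have e3 : ∀ c ∈ T, (x - c)⁻¹ * ((c - a)⁻¹ * ∏ d ∈ T.erase c, (c - d)⁻¹)
        = (x - c)⁻¹ * ∏ d ∈ (insert a T).erase c, (c - d)⁻¹ := by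
      intro c hc
      have hca : c ≠ a := fun h => haT (h ▸ hc)
      rw [erase_insert_of_ne (Ne.symm hca),
        prod_insert (fun h => haT (mem_of_mem_erase h))]
    rw [sum_congr rfl e3, erase_insert haT']
    ring

lemma swap_insert (P : Finset ℂ) (k : ℕ) (F : ℂ → Finset ℂ → ℂ) :
    ∑ I ∈ P.powersetCard (k+1), ∑ c ∈ I, F c I
    = ∑ c ∈ P, ∑ I' ∈ (P.erase c).powersetCard k, F c (insert c I') := by
  rw [sum_sigma', sum_sigma']
  refine Finset.sum_nbij' (fun a => ⟨a.2, a.1.erase a.2⟩) (fun a => ⟨insert a.1 a.2, a.1⟩)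
    ?_ ?_ ?_ ?_ ?_
  · rintro ⟨I, c⟩ h
    simp only [mem_sigma, mem_powersetCard] at h ⊢
    obtain ⟨⟨hIP, hcard⟩, hcI⟩ := h
    refine ⟨hIP hcI, ?_, ?_⟩
    · intro y hy
      have := mem_erase.1 hy
      exact mem_erase.2 ⟨this.1, hIP this.2⟩
    · rw [card_erase_of_mem hcI, hcard]; rfl
  · rintro ⟨c, I'⟩ h
    simp only [mem_sigma, mem_powersetCard] at h ⊢
    obtain ⟨hcP, hI', hcard⟩ := h
    have hcI' : c ∉ I' := fun hc => (mem_erase.1 (hI' hc)).1 rfl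
    refine ⟨⟨?_, ?_⟩, mem_insert_self _ _⟩
    · intro y hy
      rcases mem_insert.1 hy with rfl | hy
      · exact hcP
      · exact mem_of_mem_erase (hI' hy)
    · rw [card_insert_of_notMem hcI', hcard]
  · rintro ⟨I, c⟩ h
    simp only [mem_sigma, mem_powersetCard] at h
    simp [insert_erase h.2]
  · rintro ⟨c, I'⟩ h
    simp only [mem_sigma, mem_powersetCard] at h
    have hcI' : c ∉ I' := fun hc => (mem_erase.1 (h.2.1 hc)).1 rfl
    simp [erase_insert hcI']
  · rintro ⟨I, c⟩ h
    simp only [mem_sigma, mem_powersetCard] at h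
    simp [insert_erase h.2]

lemma swap_sdiff (P : Finset ℂ) (k : ℕ) (G : ℂ → Finset ℂ → ℂ) :
    ∑ I' ∈ P.powersetCard k, ∑ c ∈ P \ I', G c I'
    = ∑ c ∈ P, ∑ I' ∈ (P.erase c).powersetCard k, G c I' := by
  apply Finset.sum_comm'
  intro I' c
  simp only [mem_powersetCard, mem_sdiff]
  constructor
  · rintro ⟨⟨hIP, hcard⟩, hcP, hcI⟩
    exact ⟨⟨fun y hy => mem_erase.2 ⟨fun h => hcI (h ▸ hy), hIP hy⟩, hcard⟩, hcP⟩
  · rintro ⟨⟨hIP, hcard⟩, hcP⟩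
    exact ⟨⟨fun y hy => mem_of_mem_erase (hIP hy), hcard⟩, hcP,
      fun hc => (mem_erase.1 (hIP hc)).1 rfl⟩

noncomputable def LL (P Q : Finset ℂ) (k : ℕ) : ℂ :=
  ∑ I ∈ P.powersetCard k, (∏ m ∈ I, ∏ n ∈ P \ I, (n - m)⁻¹) * ∏ m ∈ I, ∏ n ∈ Q, (m - n)⁻¹

noncomputable def RR (P Q : Finset ℂ) (k : ℕ) : ℂ :=
  ∑ J ∈ Q.powersetCard k, (∏ m ∈ J, ∏ n ∈ Q \ J, (m - n)⁻¹) * ∏ m ∈ J, ∏ n ∈ P, (n - m)⁻¹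

noncomputable def Fterm (x : ℂ) (P Q : Finset ℂ) (c : ℂ) (I : Finset ℂ) : ℂ :=
  ((∏ m ∈ I, ∏ n ∈ P \ I, (n - m)⁻¹) * ∏ m ∈ I, ∏ n ∈ Q, (m - n)⁻¹) *
    ((x - c)⁻¹ * ∏ d ∈ I.erase c, (c - d)⁻¹)

noncomputable def Gterm (x : ℂ) (P Q : Finset ℂ) (c : ℂ) (I' : Finset ℂ) : ℂ :=
  ((-1 : ℂ) ^ (P \ I').card *
      ((∏ m ∈ I', ∏ n ∈ P \ I', (n - m)⁻¹) * ∏ m ∈ I', ∏ n ∈ Q, (m - n)⁻¹)) *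
    ((x - c)⁻¹ * ∏ d ∈ ((P \ I') ∪ Q).erase c, (c - d)⁻¹)

noncomputable def Kterm (x : ℂ) (P Q : Finset ℂ) (c : ℂ) (J : Finset ℂ) : ℂ :=
  ((∏ m ∈ J, ∏ n ∈ Q \ J, (m - n)⁻¹) * ∏ m ∈ J, ∏ n ∈ P, (n - m)⁻¹) *
    ((x - c)⁻¹ * ∏ d ∈ J.erase c, (c - d)⁻¹)

lemma prod_flip_inv (S : Finset ℂ) (x : ℂ) :
    ∏ n ∈ S, (n - x)⁻¹ = (-1 : ℂ) ^ S.card * ∏ n ∈ S, (x - n)⁻¹ := by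
  rw [← prod_const, ← prod_mul_distrib]
  apply prod_congr rfl
  intro n _
  rw [show n - x = -(x - n) by ring, inv_neg]
  ring

lemma insert_sdiff_insert' {x : ℂ} {P I : Finset ℂ} (hxP : x ∉ P) :
    insert x P \ insert x I = P \ I := by
  ext y
  simp only [mem_sdiff, mem_insert, not_or]
  constructor
  · rintro ⟨rfl | h1, h2, h3⟩
    · exact absurd rfl h2
    · exact ⟨h1, h3⟩
  · rintro ⟨h1, h2⟩
    exact ⟨Or.inr h1, fun h => hxP (h ▸ h1), h2⟩

lemma cancelFG (x c : ℂ) (P Q : Finset ℂ) (I' : Finset ℂ) (hcP : c ∈ P) (hPQ : Disjoint P Q)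
    (hI' : I' ⊆ P.erase c) :
    Fterm x P Q c (insert c I') + Gterm x P Q c I' = 0 := by
  have hcQ : c ∉ Q := disjoint_left.1 hPQ hcP
  have hcI' : c ∉ I' := fun h => (mem_erase.1 (hI' h)).1 rfl
  have hI'P : I' ⊆ P := hI'.trans (erase_subset _ _)
  set S := P \ insert c I' with hS
  have hcS : c ∉ S := by simp [hS]
  have hPI' : P \ I' = insert c S := by
    ext y
    simp only [hS, mem_sdiff, mem_insert, not_or]
    constructor
    · rintro ⟨h1, h2⟩
      by_cases hyc : y = c
      · exact Or.inl hyc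
      · exact Or.inr ⟨h1, hyc, h2⟩
    · rintro (rfl | ⟨h1, _, h3⟩)
      · exact ⟨hcP, hcI'⟩
      · exact ⟨h1, h3⟩
  have hSQ : Disjoint S Q := hPQ.mono_left sdiff_subset
  have hcSQ : c ∉ S ∪ Q := by
    simp only [mem_union]
    rintro (h | h)
    · exact hcS h
    · exact hcQ h
  have e1 : ((P \ I') ∪ Q).erase c = S ∪ Q := by
    rw [hPI', insert_union, erase_insert hcSQ]
  have e2 : (P \ I').card = S.card + 1 := by
    rw [hPI', card_insert_of_notMem hcS]
  rw [Fterm, Gterm, e1, e2, erase_insert hcI', hPI']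
  rw [prod_insert hcI', prod_insert hcI', prod_union hSQ]
  have e3 : ∀ m ∈ I', ∏ n ∈ insert c S, (n - m)⁻¹ = (c - m)⁻¹ * ∏ n ∈ S, (n - m)⁻¹ := by
    intro m hm
    rw [prod_insert hcS]
  rw [prod_congr rfl e3, prod_mul_distrib]
  rw [prod_flip_inv S c, pow_succ]
  ring

lemma L_split (x : ℂ) (P Q : Finset ℂ) (k : ℕ) (hxP : x ∉ P) (hxQ : x ∉ Q)
    (hPQ : Disjoint P Q) (hQne : Q.Nonempty) :
    LL (insert x P) Q (k+1) =
      (∑ I ∈ P.powersetCard (k+1), ∑ c ∈ I, Fterm x P Q c I)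
      + ∑ I' ∈ P.powersetCard k, ∑ c ∈ (P \ I') ∪ Q, Gterm x P Q c I' := by
  have hdisj : Disjoint (powersetCard (k+1) P) (image (insert x) (powersetCard k P)) := by
    rw [disjoint_right]
    intro I hI hI'
    obtain ⟨I'', hI'', rfl⟩ := mem_image.1 hI
    have : x ∈ P := (mem_powersetCard.1 hI').1 (mem_insert_self _ _)
    exact hxP this
  have hinj : ∀ I₁ ∈ powersetCard k P, ∀ I₂ ∈ powersetCard k P,
      insert x I₁ = insert x I₂ → I₁ = I₂ := by
    intro I₁ h₁ I₂ h₂ h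
    have hx1 : x ∉ I₁ := fun hh => hxP ((mem_powersetCard.1 h₁).1 hh)
    have hx2 : x ∉ I₂ := fun hh => hxP ((mem_powersetCard.1 h₂).1 hh)
    rw [← erase_insert hx1, h, erase_insert hx2]
  rw [LL, powersetCard_succ_insert hxP, sum_union hdisj, sum_image hinj]
  congr 1
  · apply sum_congr rfl
    intro I hI
    rw [mem_powersetCard] at hI
    have hxI : x ∉ I := fun h => hxP (hI.1 h)
    have hIne : I.Nonempty := by rw [← card_pos, hI.2]; exact Nat.succ_pos k
    have h1 : insert x P \ I = insert x (P \ I) := insert_sdiff_of_notMem P hxI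
    have hxPI : x ∉ P \ I := fun h => hxP (mem_sdiff.1 h).1
    have e1 : ∀ m ∈ I, ∏ n ∈ insert x (P \ I), (n - m)⁻¹
        = (x - m)⁻¹ * ∏ n ∈ P \ I, (n - m)⁻¹ := fun m _ => prod_insert hxPI
    rw [h1, prod_congr rfl e1, prod_mul_distrib]
    rw [show ((∏ m ∈ I, (x - m)⁻¹) * ∏ m ∈ I, ∏ n ∈ P \ I, (n - m)⁻¹) *
          ∏ m ∈ I, ∏ n ∈ Q, (m - n)⁻¹
        = ((∏ m ∈ I, ∏ n ∈ P \ I, (n - m)⁻¹) * ∏ m ∈ I, ∏ n ∈ Q, (m - n)⁻¹) *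
          ∏ m ∈ I, (x - m)⁻¹ by ring]
    rw [partial_fraction I hIne x hxI, mul_sum]
    apply sum_congr rfl
    intro c _
    rw [Fterm]
  · apply sum_congr rfl
    intro I' hI'
    rw [mem_powersetCard] at hI'
    have hxI' : x ∉ I' := fun h => hxP (hI'.1 h)
    have hsd : insert x P \ insert x I' = P \ I' := insert_sdiff_insert' hxP
    have hxPI : x ∉ P \ I' := fun h => hxP (mem_sdiff.1 h).1
    have hSQ : Disjoint (P \ I') Q := hPQ.mono_left sdiff_subset
    have hne : ((P \ I') ∪ Q).Nonempty := by
      obtain ⟨q0, hq0⟩ := hQne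
      exact ⟨q0, mem_union_right _ hq0⟩
    have hxU : x ∉ (P \ I') ∪ Q := by
      simp only [mem_union]
      rintro (h | h)
      · exact hxPI h
      · exact hxQ h
    rw [hsd, prod_insert hxI', prod_insert hxI']
    rw [prod_flip_inv (P \ I') x]
    rw [show ((((-1 : ℂ) ^ (P \ I').card * ∏ n ∈ P \ I', (x - n)⁻¹) *
            ∏ m ∈ I', ∏ n ∈ P \ I', (n - m)⁻¹) *
          ((∏ n ∈ Q, (x - n)⁻¹) * ∏ m ∈ I', ∏ n ∈ Q, (m - n)⁻¹))
        = ((-1 : ℂ) ^ (P \ I').card *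
            ((∏ m ∈ I', ∏ n ∈ P \ I', (n - m)⁻¹) * ∏ m ∈ I', ∏ n ∈ Q, (m - n)⁻¹)) *
          ((∏ n ∈ P \ I', (x - n)⁻¹) * ∏ n ∈ Q, (x - n)⁻¹) by ring]
    rw [← prod_union hSQ, partial_fraction _ hne x hxU, mul_sum]
    apply sum_congr rfl
    intro c _
    rw [Gterm]

lemma R_split (x : ℂ) (P Q : Finset ℂ) (k : ℕ) (hxP : x ∉ P) (hxQ : x ∉ Q) :
    RR (insert x P) Q (k+1) = ∑ J ∈ Q.powersetCard (k+1), ∑ c ∈ J, Kterm x P Q c J := by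
  rw [RR]
  apply sum_congr rfl
  intro J hJ
  rw [mem_powersetCard] at hJ
  have hxJ : x ∉ J := fun h => hxQ (hJ.1 h)
  have hJne : J.Nonempty := by rw [← card_pos, hJ.2]; exact Nat.succ_pos k
  have e1 : ∀ m ∈ J, ∏ n ∈ insert x P, (n - m)⁻¹
      = (x - m)⁻¹ * ∏ n ∈ P, (n - m)⁻¹ := fun m _ => prod_insert hxP
  rw [prod_congr rfl e1, prod_mul_distrib]
  rw [show (∏ m ∈ J, ∏ n ∈ Q \ J, (m - n)⁻¹) *
        ((∏ m ∈ J, (x - m)⁻¹) * ∏ m ∈ J, ∏ n ∈ P, (n - m)⁻¹)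
      = ((∏ m ∈ J, ∏ n ∈ Q \ J, (m - n)⁻¹) * ∏ m ∈ J, ∏ n ∈ P, (n - m)⁻¹) *
        ∏ m ∈ J, (x - m)⁻¹ by ring]
  rw [partial_fraction J hJne x hxJ, mul_sum]
  apply sum_congr rfl
  intro c _
  rw [Kterm]

lemma Hsum (x c : ℂ) (P Q : Finset ℂ) (k : ℕ) (hcQ : c ∈ Q) (hPQ : Disjoint P Q) :
    ∑ I' ∈ P.powersetCard k, Gterm x P Q c I'
    = ((x - c)⁻¹ * (∏ d ∈ Q.erase c, (c - d)⁻¹) * ∏ n ∈ P, (n - c)⁻¹)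
        * LL P (Q.erase c) k := by
  rw [LL, mul_sum]
  apply sum_congr rfl
  intro I' hI'
  have hIP : I' ⊆ P := (mem_powersetCard.1 hI').1
  have hcP : c ∉ P := disjoint_right.1 hPQ hcQ
  have hcPI : c ∉ P \ I' := fun h => hcP (mem_sdiff.1 h).1
  have hcQe : c ∉ Q.erase c := notMem_erase _ _
  have hSQ : Disjoint (P \ I') (Q.erase c) :=
    (hPQ.mono_left sdiff_subset).mono_right (erase_subset _ _)
  have e1 : ((P \ I') ∪ Q).erase c = (P \ I') ∪ Q.erase c := by
    rw [erase_union_distrib, erase_eq_of_notMem hcPI]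
  have e2 : ∀ m ∈ I', ∏ n ∈ Q, (m - n)⁻¹
      = (m - c)⁻¹ * ∏ n ∈ Q.erase c, (m - n)⁻¹ := by
    intro m _
    exact (mul_prod_erase Q _ hcQ).symm
  rw [Gterm, e1, prod_union hSQ, prod_congr rfl e2, prod_mul_distrib]
  have e3 : (-1 : ℂ) ^ (P \ I').card * ∏ d ∈ P \ I', (c - d)⁻¹
      = ∏ d ∈ P \ I', (d - c)⁻¹ := (prod_flip_inv _ _).symm
  have e4 : (∏ d ∈ P \ I', (d - c)⁻¹) * ∏ m ∈ I', (m - c)⁻¹ = ∏ n ∈ P, (n - c)⁻¹ :=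
    prod_sdiff hIP
  calc ((-1 : ℂ) ^ (P \ I').card *
        ((∏ m ∈ I', ∏ n ∈ P \ I', (n - m)⁻¹) *
          ((∏ m ∈ I', (m - c)⁻¹) * ∏ m ∈ I', ∏ n ∈ Q.erase c, (m - n)⁻¹))) *
        ((x - c)⁻¹ * ((∏ d ∈ P \ I', (c - d)⁻¹) * ∏ d ∈ Q.erase c, (c - d)⁻¹))
      = (((-1 : ℂ) ^ (P \ I').card * ∏ d ∈ P \ I', (c - d)⁻¹) *
          ((∏ m ∈ I', (m - c)⁻¹)) *
          ((x - c)⁻¹ * ∏ d ∈ Q.erase c, (c - d)⁻¹)) *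
          ((∏ m ∈ I', ∏ n ∈ P \ I', (n - m)⁻¹) * ∏ m ∈ I', ∏ n ∈ Q.erase c, (m - n)⁻¹) := by
        ring
    _ = _ := by
        rw [e3]
        rw [show (∏ d ∈ P \ I', (d - c)⁻¹) * (∏ m ∈ I', (m - c)⁻¹) *
            ((x - c)⁻¹ * ∏ d ∈ Q.erase c, (c - d)⁻¹)
          = ((∏ d ∈ P \ I', (d - c)⁻¹) * ∏ m ∈ I', (m - c)⁻¹) *
            ((x - c)⁻¹ * ∏ d ∈ Q.erase c, (c - d)⁻¹) by ring, e4]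
        ring

lemma Ksum (x c : ℂ) (P Q : Finset ℂ) (k : ℕ) (hcQ : c ∈ Q) (hPQ : Disjoint P Q) :
    ∑ J' ∈ (Q.erase c).powersetCard k, Kterm x P Q c (insert c J')
    = ((x - c)⁻¹ * (∏ d ∈ Q.erase c, (c - d)⁻¹) * ∏ n ∈ P, (n - c)⁻¹)
        * RR P (Q.erase c) k := by
  rw [RR, mul_sum]
  apply sum_congr rfl
  intro J' hJ'
  have hJQ : J' ⊆ Q.erase c := (mem_powersetCard.1 hJ').1
  have hcJ' : c ∉ J' := fun h => (mem_erase.1 (hJQ h)).1 rfl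
  have e1 : Q \ insert c J' = (Q.erase c) \ J' := by
    ext y
    simp only [mem_sdiff, mem_insert, mem_erase, not_or]
    tauto
  rw [Kterm, e1, erase_insert hcJ', prod_insert hcJ', prod_insert hcJ']
  have e2 : (∏ n ∈ (Q.erase c) \ J', (c - n)⁻¹) * ∏ d ∈ J', (c - d)⁻¹
      = ∏ d ∈ Q.erase c, (c - d)⁻¹ := prod_sdiff hJQ
  calc ((∏ n ∈ Q.erase c \ J', (c - n)⁻¹) * ∏ m ∈ J', ∏ n ∈ Q.erase c \ J', (m - n)⁻¹) *
        ((∏ n ∈ P, (n - c)⁻¹) * ∏ m ∈ J', ∏ n ∈ P, (n - m)⁻¹) *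
        ((x - c)⁻¹ * ∏ d ∈ J', (c - d)⁻¹)
      = ((∏ n ∈ Q.erase c \ J', (c - n)⁻¹) * ∏ d ∈ J', (c - d)⁻¹) *
        ((x - c)⁻¹ * (∏ n ∈ P, (n - c)⁻¹) *
          ((∏ m ∈ J', ∏ n ∈ Q.erase c \ J', (m - n)⁻¹) * ∏ m ∈ J', ∏ n ∈ P, (n - m)⁻¹)) := by
        ring
    _ = _ := by
        rw [e2]
        ring

theorem LL_eq_RR : ∀ (k : ℕ) (P Q : Finset ℂ), Disjoint P Q → k ≤ P.card → k ≤ Q.card →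
    LL P Q k = RR P Q k := by
  intro k
  induction k with
  | zero =>
    intro P Q _ _ _
    simp [LL, RR, powersetCard_zero]
  | succ k ih =>
    intro P Q hPQ hkP hkQ
    obtain ⟨x, hxP⟩ := card_pos.1 (Nat.lt_of_lt_of_le (Nat.succ_pos k) hkP)
    have hxP' : x ∉ P.erase x := notMem_erase _ _
    have hPins : P = insert x (P.erase x) := (insert_erase hxP).symm
    have hxQ : x ∉ Q := disjoint_left.1 hPQ hxP
    set P' := P.erase x with hP'
    have hP'Q : Disjoint P' Q := hPQ.mono_left (erase_subset _ _)
    have hQne : Q.Nonempty := card_pos.1 (Nat.lt_of_lt_of_le (Nat.succ_pos k) hkQ)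
    have hkP' : k ≤ P'.card := by
      rw [hP', card_erase_of_mem hxP]
      omega
    rw [hPins, L_split x P' Q k hxP' hxQ hP'Q hQne, R_split x P' Q k hxP' hxQ]
    have splitG : ∀ I' ∈ P'.powersetCard k,
        ∑ c ∈ (P' \ I') ∪ Q, Gterm x P' Q c I'
        = (∑ c ∈ P' \ I', Gterm x P' Q c I') + ∑ c ∈ Q, Gterm x P' Q c I' := by
      intro I' _
      exact sum_union (hP'Q.mono_left sdiff_subset)
    rw [sum_congr rfl splitG, sum_add_distrib]
    rw [swap_insert P' k (Fterm x P' Q), swap_sdiff P' k (Gterm x P' Q)]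
    have cancel :
        (∑ c ∈ P', ∑ I' ∈ (P'.erase c).powersetCard k, Fterm x P' Q c (insert c I'))
        + ∑ c ∈ P', ∑ I' ∈ (P'.erase c).powersetCard k, Gterm x P' Q c I' = 0 := by
      rw [← sum_add_distrib]
      apply sum_eq_zero
      intro c hc
      rw [← sum_add_distrib]
      apply sum_eq_zero
      intro I' hI'
      exact cancelFG x c P' Q I' hc hP'Q (mem_powersetCard.1 hI').1
    rw [← add_assoc, cancel, zero_add]
    rw [sum_comm, swap_insert Q k (Kterm x P' Q)]
    apply sum_congr rfl
    intro c hc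
    rw [Hsum x c P' Q k hc hP'Q, Ksum x c P' Q k hc hP'Q]
    have h1 : Disjoint P' (Q.erase c) := hP'Q.mono_right (erase_subset _ _)
    have h2 : k ≤ (Q.erase c).card := by
      rw [card_erase_of_mem hc]
      omega
    rw [ih P' (Q.erase c) h1 hkP' h2]

lemma powersetCard_univ_image {n : ℕ} (f : Fin n → ℂ) (hf : Function.Injective f) (k : ℕ) :
    ((univ : Finset (Fin n)).image f).powersetCard k
      = (powersetCard k (univ : Finset (Fin n))).image (image f) := by
  ext J
  simp only [mem_powersetCard, mem_image]
  constructor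
  · rintro ⟨hJ, hcard⟩
    have himg : image f (univ.filter (fun i => f i ∈ J)) = J := by
      ext y
      simp only [mem_image, mem_filter, mem_univ, true_and]
      constructor
      · rintro ⟨i, hi, rfl⟩; exact hi
      · intro hy
        obtain ⟨i, _, rfl⟩ := mem_image.1 (hJ hy)
        exact ⟨i, hy, rfl⟩
    refine ⟨univ.filter (fun i => f i ∈ J), ⟨subset_univ _, ?_⟩, himg⟩
    rw [← card_image_of_injective _ hf, himg, hcard]
  · rintro ⟨I, ⟨_, hcard⟩, rfl⟩
    exact ⟨image_subset_image (subset_univ I), by rw [card_image_of_injective _ hf, hcard]⟩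

/-- The rational functional identities (4.97) relating `N` variables `p` to
`N - ℓ` variables `q`. -/
theorem rational_functional_identity (N ℓ k : ℕ) (hN : 1 ≤ N) (hℓ : ℓ ≤ N - 1)
    (hk1 : 1 ≤ k) (hk : k ≤ N - ℓ)
    (p : Fin N → ℂ) (q : Fin (N - ℓ) → ℂ)
    (hp : Function.Injective p) (hq : Function.Injective q)
    (hpq : ∀ i j, p i ≠ q j) :
    ∑ I ∈ Finset.powersetCard k (Finset.univ : Finset (Fin N)),
      ((∏ m ∈ I, ∏ n ∈ Iᶜ, (p n - p m)⁻¹) *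
        ∏ m ∈ I, ∏ n : Fin (N - ℓ), (p m - q n)⁻¹)
    = ∑ J ∈ Finset.powersetCard k (Finset.univ : Finset (Fin (N - ℓ))),
      ((∏ m ∈ J, ∏ n ∈ Jᶜ, (q m - q n)⁻¹) *
        ∏ m ∈ J, ∏ n : Fin N, (p n - q m)⁻¹) := by
  set P : Finset ℂ := (univ : Finset (Fin N)).image p with hPdef
  set Q : Finset ℂ := (univ : Finset (Fin (N - ℓ))).image q with hQdef
  have hPQ : Disjoint P Q := by
    rw [disjoint_left]
    rintro a ha hb
    obtain ⟨i, _, rfl⟩ := mem_image.1 ha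
    obtain ⟨j, _, hj⟩ := mem_image.1 hb
    exact hpq i j hj.symm
  have hPcard : P.card = N := by
    rw [hPdef, card_image_of_injective _ hp, card_univ, Fintype.card_fin]
  have hQcard : Q.card = N - ℓ := by
    rw [hQdef, card_image_of_injective _ hq, card_univ, Fintype.card_fin]
  have key := LL_eq_RR k P Q hPQ (by rw [hPcard]; omega) (by rw [hQcard]; exact hk)
  have hinjim : ∀ s t : Finset (Fin N), image p s = image p t → s = t :=
    fun s t h => image_injective hp h
  have hinjim' : ∀ s t : Finset (Fin (N - ℓ)), image q s = image q t → s = t :=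
    fun s t h => image_injective hq h
  have hL : LL P Q k = ∑ I ∈ Finset.powersetCard k (Finset.univ : Finset (Fin N)),
      ((∏ m ∈ I, ∏ n ∈ Iᶜ, (p n - p m)⁻¹) *
        ∏ m ∈ I, ∏ n : Fin (N - ℓ), (p m - q n)⁻¹) := by
    rw [LL, hPdef, powersetCard_univ_image p hp k,
      sum_image (fun s _ t _ h => hinjim s t h)]
    apply sum_congr rfl
    intro I _
    have hsd : (univ : Finset (Fin N)).image p \ I.image p = (Iᶜ).image p := by
      rw [compl_eq_univ_sdiff, image_sdiff _ _ hp]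
    rw [hsd, prod_image (fun a _ b _ h => hp h), prod_image (fun a _ b _ h => hp h)]
    congr 1
    · apply prod_congr rfl
      intro m _
      rw [prod_image (fun a _ b _ h => hp h)]
    · apply prod_congr rfl
      intro m _
      rw [prod_image (fun a _ b _ h => hq h)]
  have hR : RR P Q k = ∑ J ∈ Finset.powersetCard k (Finset.univ : Finset (Fin (N - ℓ))),
      ((∏ m ∈ J, ∏ n ∈ Jᶜ, (q m - q n)⁻¹) *
        ∏ m ∈ J, ∏ n : Fin N, (p n - q m)⁻¹) := by
    rw [RR, hQdef, powersetCard_univ_image q hq k,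
      sum_image (fun s _ t _ h => hinjim' s t h)]
    apply sum_congr rfl
    intro J _
    have hsd : (univ : Finset (Fin (N - ℓ))).image q \ J.image q = (Jᶜ).image q := by
      rw [compl_eq_univ_sdiff, image_sdiff _ _ hq]
    rw [hsd, prod_image (fun a _ b _ h => hq h), prod_image (fun a _ b _ h => hq h)]
    congr 1
    · apply prod_congr rfl
      intro m _
      rw [prod_image (fun a _ b _ h => hq h)]
    · apply prod_congr rfl
      intro m _
      rw [prod_image (fun a _ b _ h => hp h)]
  rw [← hL, ← hR]
  exact key
end

section
/- Let z_1,…,z_N be complex numbers with sinh(z_j − z_n) ≠ 0 for all j ≠ n, and define the N×N matrix Q by Q_{jj} = −Σ_{n≠j} coth(z_j − z_n) and Q_{jk} = 1/sinh(z_j − z_k) for j ≠ k. Then the eigenvalues of Q (with multiplicity) are exactly −N+1, −N+3, …, N−1, i.e., the characteristic polynomial of Q equals ∏_{m=1}^{N} (λ − (2m − 1 − N)). -/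
open Finset Polynomial

namespace QSpec
variable (N : ℕ) (z : Fin N → ℂ)

noncomputable def Qm : Matrix (Fin N) (Fin N) ℂ := Matrix.of fun j k : Fin N =>
  if j = k then
    -(∑ n ∈ Finset.univ.erase j, Complex.cosh (z j - z n) / Complex.sinh (z j - z n))
  else (Complex.sinh (z j - z k))⁻¹

noncomputable def Pm : Matrix (Fin N) (Fin N) ℂ := Matrix.of fun j m : Fin N =>
  Complex.exp (z j) * Complex.exp (2 * z j) ^ (m : ℕ)

noncomputable def Tent (i m : ℕ) : ℂ :=
  if i = m then 2 * m + 1 - N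
  else if i < m then -2 * ∑ n : Fin N, Complex.exp (2 * z n) ^ (m - i)
  else 0

noncomputable def Tm : Matrix (Fin N) (Fin N) ℂ := Matrix.of fun i m : Fin N =>
  Tent N z (i : ℕ) (m : ℕ)

lemma sinh_eq' (j n : Fin N) : Complex.sinh (z j - z n) =
    (Complex.exp (2 * z j) - Complex.exp (2 * z n)) /
      (2 * Complex.exp (z j) * Complex.exp (z n)) := by
  have e1 : Complex.exp (2 * z j) = Complex.exp (z j) * Complex.exp (z j) := by
    rw [two_mul, Complex.exp_add]
  have e2 : Complex.exp (2 * z n) = Complex.exp (z n) * Complex.exp (z n) := by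
    rw [two_mul, Complex.exp_add]
  rw [Complex.sinh, neg_sub, Complex.exp_sub, Complex.exp_sub, e1, e2,
    div_eq_div_iff two_ne_zero
      (mul_ne_zero (mul_ne_zero two_ne_zero (Complex.exp_ne_zero _)) (Complex.exp_ne_zero _))]
  field_simp [Complex.exp_ne_zero]

lemma cosh_eq' (j n : Fin N) : Complex.cosh (z j - z n) =
    (Complex.exp (2 * z j) + Complex.exp (2 * z n)) /
      (2 * Complex.exp (z j) * Complex.exp (z n)) := by
  have e1 : Complex.exp (2 * z j) = Complex.exp (z j) * Complex.exp (z j) := by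
    rw [two_mul, Complex.exp_add]
  have e2 : Complex.exp (2 * z n) = Complex.exp (z n) * Complex.exp (z n) := by
    rw [two_mul, Complex.exp_add]
  rw [Complex.cosh, neg_sub, Complex.exp_sub, Complex.exp_sub, e1, e2,
    div_eq_div_iff two_ne_zero
      (mul_ne_zero (mul_ne_zero two_ne_zero (Complex.exp_ne_zero _)) (Complex.exp_ne_zero _))]
  field_simp [Complex.exp_ne_zero]

lemma key_geom (a b : ℂ) (m : ℕ) :
    (∑ i ∈ range m, a ^ i * b ^ (m - i)) * (a - b) = b * (a ^ m - b ^ m) := by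
  have h : (∑ i ∈ range m, a ^ i * b ^ (m - i))
      = b * ∑ i ∈ range m, a ^ i * b ^ (m - 1 - i) := by
    rw [Finset.mul_sum]
    refine Finset.sum_congr rfl fun i hi => ?_
    have hi' : i < m := Finset.mem_range.mp hi
    have : m - i = (m - 1 - i) + 1 := by omega
    rw [this, pow_succ]; ring
  rw [h, mul_assoc, geom_sum₂_mul]

end QSpec

namespace QSpec2
open QSpec

variable {N : ℕ} {z : Fin N → ℂ}
variable (hz : ∀ j n : Fin N, j ≠ n → Complex.sinh (z j - z n) ≠ 0)
include hz

lemma hx (j n : Fin N) (hjn : j ≠ n) :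
    Complex.exp (2 * z j) - Complex.exp (2 * z n) ≠ 0 := by
  intro h
  apply hz j n hjn
  rw [sinh_eq', h, zero_div]

lemma term_eq (j n : Fin N) (hjn : j ≠ n) (m : ℕ) :
    -(Complex.cosh (z j - z n) / Complex.sinh (z j - z n)) *
        (Complex.exp (z j) * Complex.exp (2 * z j) ^ m)
      + (Complex.sinh (z j - z n))⁻¹ * (Complex.exp (z n) * Complex.exp (2 * z n) ^ m)
    = Complex.exp (z j) * (-(Complex.exp (2 * z j) ^ m)
        - 2 * ∑ i ∈ range m, Complex.exp (2 * z j) ^ i * Complex.exp (2 * z n) ^ (m - i)) := by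
  set a := Complex.exp (2 * z j) with hadef
  set b := Complex.exp (2 * z n) with hbdef
  set A := Complex.exp (z j) with hAdef
  set B := Complex.exp (z n) with hBdef
  have hab : a - b ≠ 0 := hx hz j n hjn
  have hA : A ≠ 0 := Complex.exp_ne_zero _
  have hB : B ≠ 0 := Complex.exp_ne_zero _
  have hb : b = B * B := by rw [hbdef, hBdef, two_mul, Complex.exp_add]
  have key := key_geom a b m
  rw [sinh_eq' N z j n, cosh_eq' N z j n, ← hadef, ← hbdef, ← hAdef, ← hBdef]
  have h2AB : (2:ℂ)*A*B ≠ 0 := mul_ne_zero (mul_ne_zero two_ne_zero hA) hB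
  field_simp
  linear_combination 2 * key - (2*b^m) * hb


lemma lhs_eq (j : Fin N) (M : ℕ) :
    (∑ k : Fin N, Qm N z j k * (Complex.exp (z k) * Complex.exp (2 * z k) ^ M))
    = ∑ n ∈ univ.erase j, Complex.exp (z j) * (-(Complex.exp (2 * z j) ^ M)
        - 2 * ∑ i ∈ range M, Complex.exp (2 * z j) ^ i * Complex.exp (2 * z n) ^ (M - i)) := by
  rw [← Finset.add_sum_erase _ _ (Finset.mem_univ j)]
  have hdiag : Qm N z j j * (Complex.exp (z j) * Complex.exp (2 * z j) ^ M)
      = ∑ n ∈ univ.erase j, (-(Complex.cosh (z j - z n) / Complex.sinh (z j - z n)) *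
          (Complex.exp (z j) * Complex.exp (2 * z j) ^ M)) := by
    have : Qm N z j j = -(∑ n ∈ Finset.univ.erase j,
        Complex.cosh (z j - z n) / Complex.sinh (z j - z n)) := by simp [Qm]
    rw [this, neg_mul, Finset.sum_mul, ← Finset.sum_neg_distrib]
    exact Finset.sum_congr rfl fun n _ => by ring
  have hoff : ∀ k ∈ univ.erase j, Qm N z j k * (Complex.exp (z k) * Complex.exp (2 * z k) ^ M)
      = (Complex.sinh (z j - z k))⁻¹ * (Complex.exp (z k) * Complex.exp (2 * z k) ^ M) := by
    intro k hk
    have hkj : j ≠ k := (Finset.mem_erase.mp hk).1.symm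
    simp [Qm, hkj]
  rw [hdiag, Finset.sum_congr rfl hoff, ← Finset.sum_add_distrib]
  exact Finset.sum_congr rfl fun n hn =>
    term_eq hz j n (Finset.mem_erase.mp hn).1.symm M

lemma mul_eq : Qm N z * Pm N z = Pm N z * Tm N z := by
  ext j m
  have hM : (m : ℕ) < N := m.isLt
  have hN : 0 < N := j.pos
  set A := Complex.exp (z j) with hAdef
  set a := Complex.exp (2 * z j) with hadef
  set M := (m : ℕ)
  set p : ℕ → ℂ := fun s => ∑ n : Fin N, Complex.exp (2 * z n) ^ s with hpdef
  have E : ℂ := 0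
  -- LHS
  have hL : (Qm N z * Pm N z) j m
      = (2 * (M:ℂ) + 1 - N) * (A * a ^ M) - 2 * A * ∑ i ∈ range M, p (M - i) * a ^ i := by
    rw [Matrix.mul_apply]
    have : ∀ k : Fin N, Pm N z k m = Complex.exp (z k) * Complex.exp (2 * z k) ^ M := by
      intro k; simp [Pm]; rfl
    simp_rw [this]
    rw [lhs_eq hz j M]
    have hsplit : ∀ n ∈ univ.erase j,
        A * (-(a ^ M) - 2 * ∑ i ∈ range M, a ^ i * Complex.exp (2 * z n) ^ (M - i))
        = -(A * a ^ M) - 2 * A * ∑ i ∈ range M, a ^ i * Complex.exp (2 * z n) ^ (M - i) := by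
      intro n _; ring
    rw [Finset.sum_congr rfl hsplit, Finset.sum_sub_distrib, Finset.sum_const,
      Finset.card_erase_of_mem (Finset.mem_univ j), Finset.card_univ, Fintype.card_fin]
    have hswap : ∑ n ∈ univ.erase j, 2 * A * ∑ i ∈ range M, a ^ i * Complex.exp (2 * z n) ^ (M - i)
        = 2 * A * ∑ i ∈ range M, a ^ i * (p (M - i) - a ^ (M - i)) := by
      rw [← Finset.mul_sum, Finset.sum_comm]
      congr 1
      refine Finset.sum_congr rfl fun i _ => ?_
      rw [← Finset.mul_sum, Finset.sum_erase_eq_sub (Finset.mem_univ j)]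
    rw [hswap]
    have hpow : ∑ i ∈ range M, a ^ i * (p (M - i) - a ^ (M - i))
        = (∑ i ∈ range M, a ^ i * p (M - i)) - M * a ^ M := by
      simp_rw [mul_sub]
      rw [Finset.sum_sub_distrib]
      congr 1
      have : ∀ i ∈ range M, a ^ i * a ^ (M - i) = a ^ M := by
        intro i hi
        rw [← pow_add]
        congr 1
        have := Finset.mem_range.mp hi
        omega
      rw [Finset.sum_congr rfl this, Finset.sum_const, Finset.card_range, nsmul_eq_mul]
    rw [hpow]
    have hc : ((N - 1 : ℕ) : ℂ) = (N : ℂ) - 1 := by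
      push_cast [Nat.cast_sub hN]
      ring
    rw [nsmul_eq_mul, hc]
    simp_rw [mul_comm (a ^ _) (p _)]
    ring
  -- RHS
  have hR : (Pm N z * Tm N z) j m
      = (2 * (M:ℂ) + 1 - N) * (A * a ^ M) - 2 * A * ∑ i ∈ range M, p (M - i) * a ^ i := by
    rw [Matrix.mul_apply]
    have : ∀ i : Fin N, Pm N z j i * Tm N z i m = A * a ^ (i : ℕ) * Tent N z (i : ℕ) M := by
      intro i; simp [Pm, Tm]; rfl
    simp_rw [this]
    rw [Fin.sum_univ_eq_sum_range (fun i => A * a ^ i * Tent N z i M) N]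
    have hsub : ∑ i ∈ range N, A * a ^ i * Tent N z i M
        = ∑ i ∈ range (M + 1), A * a ^ i * Tent N z i M := by
      symm
      apply Finset.sum_subset
      · exact Finset.range_subset_range.mpr hM
      · intro i _ hi2
        have h1 : i ≠ M := by intro h; apply hi2; rw [h]; exact Finset.self_mem_range_succ M
        have h2 : ¬ i < M := by
          intro h; apply hi2; exact Finset.mem_range.mpr (by omega)
        rw [Tent, if_neg h1, if_neg h2, mul_zero]
    rw [hsub, Finset.sum_range_succ]
    have hlt : ∀ i ∈ range M, A * a ^ i * Tent N z i M = A * a ^ i * (-2 * p (M - i)) := by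
      intro i hi
      have hi' : i < M := Finset.mem_range.mp hi
      rw [Tent, if_neg (by omega), if_pos hi', hpdef]
    rw [Finset.sum_congr rfl hlt, Tent, if_pos rfl]
    have hconv : ∑ i ∈ range M, A * a ^ i * (-2 * p (M - i))
        = -(2 * A * ∑ i ∈ range M, p (M - i) * a ^ i) := by
      rw [Finset.mul_sum, ← Finset.sum_neg_distrib]
      exact Finset.sum_congr rfl fun i _ => by ring
    rw [hconv]
    ring
  rw [hL, hR]

lemma det_ne : (Pm N z).det ≠ 0 := by
  have hfac : Pm N z = Matrix.diagonal (fun j => Complex.exp (z j)) *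
      Matrix.vandermonde (fun j => Complex.exp (2 * z j)) := by
    ext j m
    simp [Pm, Matrix.diagonal_mul, Matrix.vandermonde]
  rw [hfac, Matrix.det_mul, Matrix.det_diagonal, Matrix.det_vandermonde]
  apply mul_ne_zero
  · exact Finset.prod_ne_zero_iff.mpr fun j _ => Complex.exp_ne_zero _
  · refine Finset.prod_ne_zero_iff.mpr fun i _ => ?_
    refine Finset.prod_ne_zero_iff.mpr fun k hk => ?_
    exact hx hz k i (Finset.mem_Ioi.mp hk).ne'

omit hz in
lemma charT : (Tm N z).charpoly
    = ∏ m ∈ Finset.range N, (X - C ((2 * (m : ℂ) + 1 - (N : ℂ)))) := by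
  rw [Matrix.charpoly_of_upperTriangular]
  · rw [← Fin.prod_univ_eq_prod_range (fun m => X - C ((2 * (m : ℂ) + 1 - (N : ℂ)))) N]
    refine Finset.prod_congr rfl fun i _ => ?_
    have : Tm N z i i = 2 * ((i:ℕ):ℂ) + 1 - N := by
      simp [Tm, Tent]
    rw [this]
  · intro i k h
    have h' : (k : ℕ) < (i : ℕ) := h
    have h1 : (i : ℕ) ≠ (k : ℕ) := by omega
    have h2 : ¬ (i : ℕ) < (k : ℕ) := by omega
    simp only [Tm, Matrix.of_apply, Tent, if_neg h1, if_neg h2]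

lemma charpoly_eq : (Qm N z).charpoly = (Tm N z).charpoly := by
  have hdet := det_ne hz
  have h1 : Matrix.charmatrix (Qm N z) * (Pm N z).map (C : ℂ →+* ℂ[X])
      = (Pm N z).map (C : ℂ →+* ℂ[X]) * Matrix.charmatrix (Tm N z) := by
    ext i k : 2
    simp only [Matrix.mul_apply, Matrix.charmatrix_apply, Matrix.map_apply, sub_mul, mul_sub,
      Finset.sum_sub_distrib, Matrix.diagonal_apply, ite_mul, mul_ite, zero_mul, mul_zero,
      Finset.sum_ite_eq, Finset.sum_ite_eq', Finset.mem_univ, if_true]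
    have h2 : (∑ x : Fin N, C (Qm N z i x) * C (Pm N z x k))
        = ∑ x : Fin N, C (Pm N z i x) * C (Tm N z x k) := by
      simp_rw [← map_mul, ← map_sum]
      have h3 : (Qm N z * Pm N z) i k = (Pm N z * Tm N z) i k := by rw [mul_eq hz]
      rw [Matrix.mul_apply, Matrix.mul_apply] at h3
      rw [h3]
    rw [h2, mul_comm (C (Pm N z i k)) X]
  have hdc : ((Pm N z).map (C : ℂ →+* ℂ[X])).det = C ((Pm N z).det) := by
    rw [← RingHom.mapMatrix_apply, ← RingHom.map_det]
  have h2 : (Qm N z).charpoly * C ((Pm N z).det) = (Tm N z).charpoly * C ((Pm N z).det) := by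
    rw [Matrix.charpoly, Matrix.charpoly, ← hdc, ← Matrix.det_mul, h1, Matrix.det_mul]
    ring
  exact mul_right_cancel₀ (Polynomial.C_ne_zero.mpr hdet) h2

end QSpec2


/-- Corollary 4.4: the matrix `Q` with `Q_{jj} = -Σ_{n≠j} coth(z_j - z_n)` and
`Q_{jk} = 1/sinh(z_j - z_k)` for `j ≠ k` has spectrum `{-N+1, -N+3, …, N-1}`:
its characteristic polynomial is `∏_{m=0}^{N-1} (λ - (2m + 1 - N))`. -/
theorem Q_spectrum (N : ℕ) (z : Fin N → ℂ)
    (hz : ∀ j n : Fin N, j ≠ n → Complex.sinh (z j - z n) ≠ 0) :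
    Matrix.charpoly (Matrix.of fun j k : Fin N =>
      if j = k then
        -(∑ n ∈ Finset.univ.erase j, Complex.cosh (z j - z n) / Complex.sinh (z j - z n))
      else (Complex.sinh (z j - z k))⁻¹)
    = ∏ m ∈ Finset.range N, (Polynomial.X - Polynomial.C ((2 * (m : ℂ) + 1 - (N : ℂ)))) := by
  have h : (Matrix.of fun j k : Fin N =>
      if j = k then
        -(∑ n ∈ Finset.univ.erase j, Complex.cosh (z j - z n) / Complex.sinh (z j - z n))
      else (Complex.sinh (z j - z k))⁻¹) = QSpec.Qm N z := rfl
  rw [h, QSpec2.charpoly_eq hz, QSpec2.charT]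
end

section
/- Let N ≥ 2 and ρ a complex number, and x_1,…,x_N complex numbers such that sinh(π(x_m−x_n)/a) ≠ 0 for all m ≠ n, where a > 0. For each k ∈ {1,…,N}, Σ_{|I|=k} ∏_{m∈I, n∉I} sinh(π(x_m − x_n + ρ)/a)/sinh(π(x_m − x_n)/a) = S_k(e^{π(N−1)ρ/a}, e^{π(N−3)ρ/a}, …, e^{−π(N−1)ρ/a}), where S_k is the k-th elementary symmetric polynomial. -/
open Finset

/-- The `j`-th elementary symmetric function of the elements of a multiset. -/
noncomputable def esymm (s : Multiset ℂ) (j : ℕ) : ℂ :=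
  ((s.powersetCard j).map Multiset.prod).sum

/-! ### Auxiliary development -/

/-- the basic ratio `(v m - s v n)/(v m - v n)` -/
noncomputable def rr {ι : Type*} (s : ℂ) (v : ι → ℂ) (m n : ι) : ℂ :=
  (v m - s * v n) / (v m - v n)

/-- residue coefficient for `pf1` -/
noncomputable def cc {ι : Type*} [DecidableEq ι] (s : ℂ) (v : ι → ℂ) (T : Finset ι) (j : ι) : ℂ :=
  (1 - s) * v j * ∏ n ∈ T.erase j, rr s v j n

/-- residue coefficient for `pf2` -/
noncomputable def dd {ι : Type*} [DecidableEq ι] (s : ℂ) (v : ι → ℂ) (T : Finset ι) (j : ι) : ℂ :=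
  (1 - s) * v j * ∏ m ∈ T.erase j, rr s v m j

/-- Partial fraction expansion, first kind. -/
lemma pf1 {ι : Type*} [DecidableEq ι] (s : ℂ) (v : ι → ℂ) (S : Finset ι) :
    (∀ m ∈ S, ∀ n ∈ S, m ≠ n → v m ≠ v n) → ∀ z : ℂ, (∀ n ∈ S, z ≠ v n) →
    ∏ n ∈ S, (z - s * v n) / (z - v n)
      = 1 + ∑ j ∈ S, cc s v S j / (z - v j) := by
  induction S using Finset.induction_on with
  | empty => intro _ z _; simp
  | @insert b S' hb IH =>
    intro hd z hz
    have hdS' : ∀ m ∈ S', ∀ n ∈ S', m ≠ n → v m ≠ v n := fun m hm n hn h =>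
      hd m (mem_insert_of_mem hm) n (mem_insert_of_mem hn) h
    have hbS' : ∀ n ∈ S', b ≠ n := fun n hn h => hb (h ▸ hn)
    have hzS' : ∀ n ∈ S', z ≠ v n := fun n hn => hz n (mem_insert_of_mem hn)
    have hzb : z ≠ v b := hz b (mem_insert_self _ _)
    have hvbS' : ∀ n ∈ S', v b ≠ v n := fun n hn =>
      hd b (mem_insert_self _ _) n (mem_insert_of_mem hn) (hbS' n hn)
    have IHz := IH hdS' z hzS'
    have IHb := IH hdS' (v b) hvbS'
    have hccb : cc s v (insert b S') b
        = (1 - s) * v b * ∏ n ∈ S', (v b - s * v n) / (v b - v n) := by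
      rw [cc, erase_insert hb]; rfl
    have hccj : ∀ j ∈ S', cc s v (insert b S') j = cc s v S' j * rr s v j b := by
      intro j hj
      have hbj : b ≠ j := fun h => hb (by rw [h]; exact hj)
      rw [cc, cc, erase_insert_of_ne hbj,
        prod_insert (fun h => hb (mem_of_mem_erase h))]
      ring
    have hsum : ∑ j ∈ S', cc s v (insert b S') j / (z - v j)
        = ∑ j ∈ S', (cc s v S' j * rr s v j b) / (z - v j) :=
      Finset.sum_congr rfl fun j hj => by rw [hccj j hj]
    rw [prod_insert hb, IHz, sum_insert hb, hccb, IHb, hsum]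
    have key : ∑ j ∈ S', (z - s * v b) / (z - v b) * (cc s v S' j / (z - v j))
        = ∑ j ∈ S', (((1 - s) * v b * (cc s v S' j / (v b - v j))) / (z - v b)
            + (cc s v S' j * rr s v j b) / (z - v j)) := by
      refine Finset.sum_congr rfl fun j hj => ?_
      have h1 : z - v b ≠ 0 := sub_ne_zero.2 hzb
      have h2 : z - v j ≠ 0 := sub_ne_zero.2 (hzS' j hj)
      have h3 : v b - v j ≠ 0 := sub_ne_zero.2 (hvbS' j hj)
      have h4 : v j - v b ≠ 0 := sub_ne_zero.2 (hvbS' j hj).symm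
      rw [rr]
      field_simp
      ring
    rw [mul_add, mul_one, mul_sum, key, Finset.sum_add_distrib, ← Finset.sum_div, ← mul_sum]
    have h1 : z - v b ≠ 0 := sub_ne_zero.2 hzb
    field_simp
    ring

/-- Partial fraction expansion, second kind. -/
lemma pf2 {ι : Type*} [DecidableEq ι] (s : ℂ) (v : ι → ℂ) (S : Finset ι) :
    (∀ m ∈ S, ∀ n ∈ S, m ≠ n → v m ≠ v n) → ∀ z : ℂ, (∀ n ∈ S, z ≠ v n) →
    ∏ m ∈ S, (v m - s * z) / (v m - z)
      = s ^ S.card - ∑ j ∈ S, dd s v S j / (z - v j) := by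
  induction S using Finset.induction_on with
  | empty => intro _ z _; simp
  | @insert b S' hb IH =>
    intro hd z hz
    have hdS' : ∀ m ∈ S', ∀ n ∈ S', m ≠ n → v m ≠ v n := fun m hm n hn h =>
      hd m (mem_insert_of_mem hm) n (mem_insert_of_mem hn) h
    have hbS' : ∀ n ∈ S', b ≠ n := fun n hn h => hb (h ▸ hn)
    have hzS' : ∀ n ∈ S', z ≠ v n := fun n hn => hz n (mem_insert_of_mem hn)
    have hzb : z ≠ v b := hz b (mem_insert_self _ _)
    have hvbS' : ∀ n ∈ S', v b ≠ v n := fun n hn =>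
      hd b (mem_insert_self _ _) n (mem_insert_of_mem hn) (hbS' n hn)
    have IHz := IH hdS' z hzS'
    have IHb := IH hdS' (v b) hvbS'
    have hddb : dd s v (insert b S') b
        = (1 - s) * v b * ∏ m ∈ S', (v m - s * v b) / (v m - v b) := by
      rw [dd, erase_insert hb]; rfl
    have hddj : ∀ j ∈ S', dd s v (insert b S') j = dd s v S' j * rr s v b j := by
      intro j hj
      have hbj : b ≠ j := fun h => hb (by rw [h]; exact hj)
      rw [dd, dd, erase_insert_of_ne hbj,
        prod_insert (fun h => hb (mem_of_mem_erase h))]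
      ring
    have hsum : ∑ j ∈ S', dd s v (insert b S') j / (z - v j)
        = ∑ j ∈ S', (dd s v S' j * rr s v b j) / (z - v j) :=
      Finset.sum_congr rfl fun j hj => by rw [hddj j hj]
    rw [prod_insert hb, IHz, sum_insert hb, hddb, IHb, card_insert_of_notMem hb, hsum]
    have key : ∑ j ∈ S', (v b - s * z) / (v b - z) * (dd s v S' j / (z - v j))
        = ∑ j ∈ S', ((dd s v S' j * rr s v b j) / (z - v j)
            - ((1 - s) * v b * (dd s v S' j / (v b - v j))) / (z - v b)) := by
      refine Finset.sum_congr rfl fun j hj => ?_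
      have h1 : z - v b ≠ 0 := sub_ne_zero.2 hzb
      have h2 : z - v j ≠ 0 := sub_ne_zero.2 (hzS' j hj)
      have h3 : v b - v j ≠ 0 := sub_ne_zero.2 (hvbS' j hj)
      have h4 : v b - z ≠ 0 := sub_ne_zero.2 (fun h => hzb h.symm)
      rw [rr]
      field_simp
      ring
    rw [mul_sub, mul_sum, key, Finset.sum_sub_distrib, ← Finset.sum_div, ← mul_sum]
    have h1 : z - v b ≠ 0 := sub_ne_zero.2 hzb
    have h4 : v b - z ≠ 0 := sub_ne_zero.2 (fun h => hzb h.symm)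
    field_simp
    ring

/-- The fundamental recursion for the subset sums. -/
lemma frec {ι : Type*} [DecidableEq ι] (s : ℂ) (v : ι → ℂ) (A : Finset ι) (a : ι) (ha : a ∉ A)
    (hd : ∀ m ∈ insert a A, ∀ n ∈ insert a A, m ≠ n → v m ≠ v n) (k : ℕ) :
    ∑ I ∈ (insert a A).powersetCard (k + 1), ∏ m ∈ I, ∏ n ∈ (insert a A) \ I, rr s v m n
      = (∑ I ∈ A.powersetCard k, ∏ m ∈ I, ∏ n ∈ A \ I, rr s v m n)
        + s ^ (k + 1) * ∑ I ∈ A.powersetCard (k + 1), ∏ m ∈ I, ∏ n ∈ A \ I, rr s v m n := by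
  have hdA : ∀ m ∈ A, ∀ n ∈ A, m ≠ n → v m ≠ v n := fun m hm n hn h =>
    hd m (mem_insert_of_mem hm) n (mem_insert_of_mem hn) h
  have hza : ∀ n ∈ A, v a ≠ v n := fun n hn =>
    hd a (mem_insert_self _ _) n (mem_insert_of_mem hn) (fun h => ha (h ▸ hn))
  have hdisj : Disjoint (A.powersetCard (k + 1)) ((A.powersetCard k).image (insert a)) := by
    rw [Finset.disjoint_left]
    intro I hI hI2
    obtain ⟨I', hI', rfl⟩ := mem_image.1 hI2
    exact ha ((mem_powersetCard.1 hI).1 (mem_insert_self _ _))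
  have hinj : ∀ I ∈ A.powersetCard k, ∀ J ∈ A.powersetCard k,
      insert a I = insert a J → I = J := by
    intro I hI J hJ h
    have haI : a ∉ I := fun h' => ha ((mem_powersetCard.1 hI).1 h')
    have haJ : a ∉ J := fun h' => ha ((mem_powersetCard.1 hJ).1 h')
    rw [← Finset.erase_insert haI, h, Finset.erase_insert haJ]
  rw [Finset.powersetCard_succ_insert ha, Finset.sum_union hdisj, Finset.sum_image hinj]
  -- rewrite the J-terms (subsets not containing a)
  have hJterm : ∀ J ∈ A.powersetCard (k + 1),
      ∏ m ∈ J, ∏ n ∈ (insert a A) \ J, rr s v m n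
        = (s ^ (k + 1) - ∑ j ∈ J, dd s v J j / (v a - v j))
            * ∏ m ∈ J, ∏ n ∈ A \ J, rr s v m n := by
    intro J hJ
    obtain ⟨hJA, hJcard⟩ := mem_powersetCard.1 hJ
    have haJ : a ∉ J := fun h => ha (hJA h)
    have haAJ : a ∉ A \ J := fun h => ha (mem_sdiff.1 h).1
    have h1 : (insert a A) \ J = insert a (A \ J) := Finset.insert_sdiff_of_notMem _ haJ
    have h2 : ∏ m ∈ J, ∏ n ∈ (insert a A) \ J, rr s v m n
        = (∏ m ∈ J, rr s v m a) * ∏ m ∈ J, ∏ n ∈ A \ J, rr s v m n := by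
      rw [h1, ← Finset.prod_mul_distrib]
      exact Finset.prod_congr rfl fun m hm => Finset.prod_insert haAJ
    rw [h2]
    congr 1
    have := pf2 s v J (fun m hm n hn h => hdA m (hJA hm) n (hJA hn) h) (v a)
      (fun n hn => hza n (hJA hn))
    rw [hJcard] at this
    rw [← this]
    exact Finset.prod_congr rfl fun m _ => rfl
  -- rewrite the I'-terms (subsets containing a)
  have hIterm : ∀ I' ∈ A.powersetCard k,
      ∏ m ∈ insert a I', ∏ n ∈ (insert a A) \ insert a I', rr s v m n
        = (1 + ∑ j ∈ A \ I', cc s v (A \ I') j / (v a - v j))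
            * ∏ m ∈ I', ∏ n ∈ A \ I', rr s v m n := by
    intro I' hI'
    obtain ⟨hIA, hIcard⟩ := mem_powersetCard.1 hI'
    have haI : a ∉ I' := fun h => ha (hIA h)
    have h1 : (insert a A) \ insert a I' = A \ I' := by
      ext x
      simp only [mem_sdiff, mem_insert, not_or]
      constructor
      · rintro ⟨h | h, hna, hnI⟩
        · exact absurd h hna
        · exact ⟨h, hnI⟩
      · rintro ⟨hA, hI⟩
        exact ⟨Or.inr hA, fun e => ha (e ▸ hA), hI⟩
    rw [h1, Finset.prod_insert haI]
    congr 1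
    have := pf1 s v (A \ I')
      (fun m hm n hn h => hdA m (mem_sdiff.1 hm).1 n (mem_sdiff.1 hn).1 h) (v a)
      (fun n hn => hza n (mem_sdiff.1 hn).1)
    rw [← this]
    exact Finset.prod_congr rfl fun n _ => rfl
  rw [Finset.sum_congr rfl hJterm, Finset.sum_congr rfl hIterm]
  -- the cross terms cancel
  have cross : ∑ I' ∈ A.powersetCard k,
        (∑ j ∈ A \ I', cc s v (A \ I') j / (v a - v j))
          * ∏ m ∈ I', ∏ n ∈ A \ I', rr s v m n
      = ∑ J ∈ A.powersetCard (k + 1),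
        (∑ j ∈ J, dd s v J j / (v a - v j)) * ∏ m ∈ J, ∏ n ∈ A \ J, rr s v m n := by
    simp only [Finset.sum_mul]
    rw [Finset.sum_sigma', Finset.sum_sigma']
    refine Finset.sum_nbij' (fun x => ⟨insert x.2 x.1, x.2⟩) (fun x => ⟨x.1.erase x.2, x.2⟩)
      ?_ ?_ ?_ ?_ ?_
    · rintro ⟨I', j⟩ hx
      simp only [Finset.mem_sigma] at hx ⊢
      obtain ⟨hI', hj⟩ := hx
      obtain ⟨hIA, hIcard⟩ := mem_powersetCard.1 hI'
      obtain ⟨hjA, hjI⟩ := mem_sdiff.1 hj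
      exact ⟨mem_powersetCard.2 ⟨insert_subset hjA hIA, by rw [card_insert_of_notMem hjI, hIcard]⟩,
        mem_insert_self _ _⟩
    · rintro ⟨J, j⟩ hx
      simp only [Finset.mem_sigma] at hx ⊢
      obtain ⟨hJ, hj⟩ := hx
      obtain ⟨hJA, hJcard⟩ := mem_powersetCard.1 hJ
      refine ⟨mem_powersetCard.2 ⟨(Finset.erase_subset _ _).trans hJA, ?_⟩,
        mem_sdiff.2 ⟨hJA hj, notMem_erase _ _⟩⟩
      rw [Finset.card_erase_of_mem hj, hJcard]
      rfl
    · rintro ⟨I', j⟩ hx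
      simp only [Finset.mem_sigma] at hx
      obtain ⟨hI', hj⟩ := hx
      have : j ∉ I' := (mem_sdiff.1 hj).2
      simp only [Sigma.mk.inj_iff, heq_eq_eq]
      exact ⟨Finset.erase_insert this, trivial⟩
    · rintro ⟨J, j⟩ hx
      simp only [Finset.mem_sigma] at hx
      obtain ⟨hJ, hj⟩ := hx
      simp only [Sigma.mk.inj_iff, heq_eq_eq]
      exact ⟨Finset.insert_erase hj, trivial⟩
    · rintro ⟨I', j⟩ hx
      simp only [Finset.mem_sigma] at hx
      obtain ⟨hI', hj⟩ := hx
      obtain ⟨hIA, hIcard⟩ := mem_powersetCard.1 hI'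
      obtain ⟨hjA, hjI⟩ := mem_sdiff.1 hj
      -- term equality
      have hE : A \ insert j I' = (A \ I').erase j := by
        ext x
        simp only [mem_sdiff, mem_insert, not_or, mem_erase]
        tauto
      have hAsplit : ∏ m ∈ I', ∏ n ∈ A \ I', rr s v m n
          = (∏ m ∈ I', rr s v m j) * ∏ m ∈ I', ∏ n ∈ (A \ I').erase j, rr s v m n := by
        rw [← Finset.prod_mul_distrib]
        refine Finset.prod_congr rfl fun m hm => ?_
        conv_lhs => rw [← Finset.insert_erase hj, Finset.prod_insert (notMem_erase _ _)]
      have hBsplit : ∏ m ∈ insert j I', ∏ n ∈ A \ insert j I', rr s v m n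
          = (∏ n ∈ (A \ I').erase j, rr s v j n)
              * ∏ m ∈ I', ∏ n ∈ (A \ I').erase j, rr s v m n := by
        rw [Finset.prod_insert hjI, hE]
      have hdd : dd s v (insert j I') j = (1 - s) * v j * ∏ m ∈ I', rr s v m j := by
        rw [dd, Finset.erase_insert hjI]
      have hcc : cc s v (A \ I') j
          = (1 - s) * v j * ∏ n ∈ (A \ I').erase j, rr s v j n := rfl
      rw [hcc, hdd, hAsplit, hBsplit]
      ring
  simp only [sub_mul, add_mul, one_mul]
  rw [Finset.sum_sub_distrib, Finset.sum_add_distrib, ← Finset.mul_sum, cross]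
  ring

lemma esymm_zero (t : Multiset ℂ) : esymm t 0 = 1 := by
  simp [esymm]

lemma esymm_big (t : Multiset ℂ) (k : ℕ) (h : Multiset.card t < k) : esymm t k = 0 := by
  rw [esymm, Multiset.powersetCard_eq_empty _ h]
  rfl

lemma esymm_cons (c : ℂ) (t : Multiset ℂ) (k : ℕ) :
    esymm (c ::ₘ t) (k + 1) = esymm t (k + 1) + c * esymm t k := by
  unfold esymm
  rw [Multiset.powersetCard_cons, Multiset.map_add, Multiset.sum_add, Multiset.map_map]
  congr 1
  rw [show (Multiset.prod ∘ Multiset.cons c) = fun u : Multiset ℂ => c * u.prod from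
    funext fun u => by simp [Multiset.prod_cons]]
  exact Multiset.sum_map_mul_left

lemma esymm_scale (c : ℂ) (t : Multiset ℂ) (k : ℕ) :
    esymm (t.map (fun x => c * x)) k = c ^ k * esymm t k := by
  unfold esymm
  rw [Multiset.powersetCard_map, Multiset.map_map]
  have h : ∀ u ∈ t.powersetCard k,
      (Multiset.prod ∘ Multiset.map fun x => c * x) u = c ^ k * u.prod := by
    intro u hu
    have hcard : Multiset.card u = k := (Multiset.mem_powersetCard.1 hu).2
    simp only [Function.comp_apply]
    have h2 : (u.map fun x => c * x).prod = (u.map fun _ => c).prod * (u.map id).prod := by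
      rw [← Multiset.prod_map_mul]
      rfl
    rw [h2, Multiset.map_const', Multiset.prod_replicate, Multiset.map_id, hcard]
  rw [Multiset.map_congr rfl h]
  exact Multiset.sum_map_mul_left

lemma range_peel (n : ℕ) : Multiset.range (n + 1) = 0 ::ₘ (Multiset.range n).map (· + 1) := by
  induction n with
  | zero => rfl
  | succ n ih =>
    calc Multiset.range (n + 2) = (n + 1) ::ₘ Multiset.range (n + 1) := Multiset.range_succ _
      _ = (n + 1) ::ₘ (0 ::ₘ (Multiset.range n).map (· + 1)) := by rw [ih]
      _ = 0 ::ₘ ((n + 1) ::ₘ (Multiset.range n).map (· + 1)) := Multiset.cons_swap _ _ _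
      _ = 0 ::ₘ (Multiset.range (n + 1)).map (· + 1) := by
          rw [Multiset.range_succ, Multiset.map_cons]

lemma esymmGeo_succ (s : ℂ) (n k : ℕ) :
    esymm ((Multiset.range (n + 1)).map (fun i => s ^ i)) (k + 1)
      = s ^ (k + 1) * esymm ((Multiset.range n).map (fun i => s ^ i)) (k + 1)
        + s ^ k * esymm ((Multiset.range n).map (fun i => s ^ i)) k := by
  rw [range_peel, Multiset.map_cons, pow_zero]
  have h : (Multiset.range n).map ((fun i => s ^ i) ∘ (· + 1))
      = ((Multiset.range n).map (fun i => s ^ i)).map (fun x => s * x) := by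
    rw [Multiset.map_map]
    exact Multiset.map_congr rfl fun i _ => by simp [Function.comp, pow_succ, mul_comm]
  rw [Multiset.map_map, h, esymm_cons, esymm_scale, esymm_scale, one_mul, add_comm]

lemma nat_tri_succ (k : ℕ) : (k + 1) * ((k + 1) - 1) / 2 = k * (k - 1) / 2 + k := by
  have h : (k + 1) * ((k + 1) - 1) = k * (k - 1) + 2 * k := by
    cases k with
    | zero => rfl
    | succ j =>
      simp only [Nat.add_sub_cancel]
      ring
  rw [h, Nat.add_mul_div_left _ _ (by norm_num : 0 < 2)]

/-- The core identity. -/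
lemma core {ι : Type*} [DecidableEq ι] (s : ℂ) (v : ι → ℂ) (A : Finset ι) :
    (∀ m ∈ A, ∀ n ∈ A, m ≠ n → v m ≠ v n) → ∀ k : ℕ,
    (∑ I ∈ A.powersetCard k, ∏ m ∈ I, ∏ n ∈ A \ I, rr s v m n) * s ^ (k * (k - 1) / 2)
      = esymm ((Multiset.range A.card).map (fun i => s ^ i)) k := by
  induction A using Finset.induction_on with
  | empty =>
    intro _ k
    cases k with
    | zero => simp [esymm]
    | succ k =>
      rw [Finset.powersetCard_eq_empty.2 (by simp)]
      rw [Finset.card_empty]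
      rw [esymm_big _ _ (by simp)]
      simp
  | @insert a A ha IH =>
    intro hd k
    have hdA : ∀ m ∈ A, ∀ n ∈ A, m ≠ n → v m ≠ v n := fun m hm n hn h =>
      hd m (mem_insert_of_mem hm) n (mem_insert_of_mem hn) h
    cases k with
    | zero =>
      simp [esymm_zero]
    | succ k =>
      rw [frec s v A a ha hd k, card_insert_of_notMem ha, esymmGeo_succ,
        nat_tri_succ, pow_add]
      have h1 := IH hdA k
      have h2 := IH hdA (k + 1)
      rw [nat_tri_succ, pow_add] at h2
      linear_combination s ^ k * h1 + s ^ (k + 1) * h2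

/-- Corollary 2.4 (hyperbolic version): the functional identities
`Σ_{|I|=k} ∏_{m∈I,n∉I} sinh(π(x_m-x_n+ρ)/a)/sinh(π(x_m-x_n)/a)
  = S_k(e^{π(N-1)ρ/a}, …, e^{-π(N-1)ρ/a})`. -/
theorem sinh_sum_esymm (N : ℕ) (hN : 2 ≤ N) (a : ℝ) (ha : 0 < a) (ρ : ℂ)
    (x : Fin N → ℂ)
    (hx : ∀ m n : Fin N, m ≠ n → Complex.sinh ((Real.pi : ℂ) * (x m - x n) / a) ≠ 0)
    (k : ℕ) (hk1 : 1 ≤ k) (hk : k ≤ N) :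
    ∑ I ∈ Finset.powersetCard k (Finset.univ : Finset (Fin N)),
      ∏ m ∈ I, ∏ n ∈ Iᶜ,
        Complex.sinh ((Real.pi : ℂ) * (x m - x n + ρ) / a) /
          Complex.sinh ((Real.pi : ℂ) * (x m - x n) / a)
    = esymm ((Multiset.range N).map
        (fun i => Complex.exp ((Real.pi : ℂ) * ((N : ℂ) - 1 - 2 * (i : ℂ)) * ρ / a))) k := by
  classical
  set π' : ℂ := (Real.pi : ℂ) with hπ'
  have haC : (a : ℂ) ≠ 0 := by
    exact_mod_cast ha.ne'
  set q : ℂ := Complex.exp (π' * ρ / a) with hq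
  set p : ℂ := Complex.exp (-(π' * ρ) / a) with hp
  have hqp : q * p = 1 := by
    rw [hq, hp, ← Complex.exp_add, show π' * ρ / a + -(π' * ρ) / a = 0 by ring,
      Complex.exp_zero]
  set s : ℂ := p ^ 2 with hs
  set u : Fin N → ℂ := fun j => Complex.exp (π' * x j / a) with hu
  set w : Fin N → ℂ := fun j => u j ^ 2 with hw
  have hune : ∀ j, u j ≠ 0 := fun j => Complex.exp_ne_zero _
  have hqne : q ≠ 0 := Complex.exp_ne_zero _
  have sinh_def : ∀ z : ℂ, Complex.sinh z = (Complex.exp z - Complex.exp (-z)) / 2 :=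
    fun z => rfl
  have hpq : p = 1 / q := by
    field_simp
    linear_combination hqp
  have sinh_den : ∀ m n : Fin N, Complex.sinh (π' * (x m - x n) / a)
      = (w m - w n) / (2 * u m * u n) := by
    intro m n
    rw [sinh_def]
    have e1 : Complex.exp (π' * (x m - x n) / a) = u m / u n := by
      simp only [hu]
      rw [← Complex.exp_sub]
      congr 1
      ring
    have e2 : Complex.exp (-(π' * (x m - x n) / a)) = u n / u m := by
      simp only [hu]
      rw [← Complex.exp_sub]
      congr 1
      ring
    rw [e1, e2]
    simp only [hw]
    have h2 : u m ≠ 0 := hune m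
    have h3 : u n ≠ 0 := hune n
    field_simp
  have sinh_num : ∀ m n : Fin N, Complex.sinh (π' * (x m - x n + ρ) / a)
      = q * (w m - s * w n) / (2 * u m * u n) := by
    intro m n
    rw [sinh_def]
    have e1 : Complex.exp (π' * (x m - x n + ρ) / a) = u m * q / u n := by
      simp only [hu, hq]
      rw [← Complex.exp_add, ← Complex.exp_sub]
      congr 1
      ring
    have e2 : Complex.exp (-(π' * (x m - x n + ρ) / a)) = u n * p / u m := by
      simp only [hu, hp]
      rw [← Complex.exp_add, ← Complex.exp_sub]
      congr 1
      ring
    rw [e1, e2]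
    simp only [hw, hs, hpq]
    have h2 : u m ≠ 0 := hune m
    have h3 : u n ≠ 0 := hune n
    field_simp
  have hwne : ∀ m n : Fin N, m ≠ n → w m ≠ w n := by
    intro m n hmn heq
    apply hx m n hmn
    rw [sinh_den m n, heq, sub_self, zero_div]
  have ratio : ∀ m n : Fin N, m ≠ n →
      Complex.sinh (π' * (x m - x n + ρ) / a) / Complex.sinh (π' * (x m - x n) / a)
        = q * rr s w m n := by
    intro m n hmn
    have hB : w m - w n ≠ 0 := sub_ne_zero.2 (hwne m n hmn)
    have h2 : u m ≠ 0 := hune m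
    have h3 : u n ≠ 0 := hune n
    rw [sinh_num, sinh_den, rr]
    field_simp
  -- rewrite the LHS
  have hLHS : ∑ I ∈ Finset.powersetCard k (Finset.univ : Finset (Fin N)),
      ∏ m ∈ I, ∏ n ∈ Iᶜ,
        Complex.sinh (π' * (x m - x n + ρ) / a) / Complex.sinh (π' * (x m - x n) / a)
      = q ^ (k * (N - k)) *
        ∑ I ∈ Finset.powersetCard k (Finset.univ : Finset (Fin N)),
          ∏ m ∈ I, ∏ n ∈ Finset.univ \ I, rr s w m n := by
    rw [Finset.mul_sum]
    refine Finset.sum_congr rfl fun I hI => ?_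
    have hIcard : I.card = k := (Finset.mem_powersetCard.1 hI).2
    have hcompl : Iᶜ = (Finset.univ : Finset (Fin N)) \ I := by
      simp [Finset.compl_eq_univ_sdiff]
    have hccard : Iᶜ.card = N - k := by
      rw [Finset.card_compl, hIcard, Fintype.card_fin]
    have step1 : ∏ m ∈ I, ∏ n ∈ Iᶜ,
          Complex.sinh (π' * (x m - x n + ρ) / a) / Complex.sinh (π' * (x m - x n) / a)
        = ∏ m ∈ I, ∏ n ∈ Iᶜ, (q * rr s w m n) := by
      refine Finset.prod_congr rfl fun m hm => Finset.prod_congr rfl fun n hn => ?_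
      have hmn : m ≠ n := by
        rintro rfl
        exact (Finset.mem_compl.1 hn) hm
      exact ratio m n hmn
    rw [step1]
    have step2 : ∏ m ∈ I, ∏ n ∈ Iᶜ, (q * rr s w m n)
        = ∏ m ∈ I, (q ^ (N - k) * ∏ n ∈ Iᶜ, rr s w m n) := by
      refine Finset.prod_congr rfl fun m hm => ?_
      rw [Finset.prod_mul_distrib, Finset.prod_const, hccard]
    rw [step2, Finset.prod_mul_distrib, Finset.prod_const, hIcard, ← pow_mul, hcompl,
      Nat.mul_comm (N - k) k]
  rw [hLHS]
  -- core identity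
  have hdistinct : ∀ m ∈ (Finset.univ : Finset (Fin N)), ∀ n ∈ Finset.univ,
      m ≠ n → w m ≠ w n := fun m _ n _ h => hwne m n h
  have hcore := core s w Finset.univ hdistinct k
  rw [Finset.card_univ, Fintype.card_fin] at hcore
  -- rewrite the RHS
  set Q : ℂ := Complex.exp (π' * ((N : ℂ) - 1) * ρ / a) with hQ
  have hRHSelts : ∀ i : ℕ, Complex.exp (π' * ((N : ℂ) - 1 - 2 * (i : ℂ)) * ρ / a)
      = Q * s ^ i := by
    intro i
    rw [hs, ← pow_mul, hp, ← Complex.exp_nat_mul, hQ, ← Complex.exp_add]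
    congr 1
    push_cast
    ring
  have hcast : ((do let i ← Multiset.range N; pure ((i : ℕ) : ℂ)) : Multiset ℂ)
      = (Multiset.range N).map (fun i : ℕ => (i : ℂ)) :=
    bind_pure_comp (fun i : ℕ => (i : ℂ)) (Multiset.range N)
  rw [hcast, Multiset.map_map]
  have hmap : (Multiset.range N).map
        ((fun i : ℂ => Complex.exp (π' * ((N : ℂ) - 1 - 2 * i) * ρ / a)) ∘ (fun i : ℕ => (i : ℂ)))
      = ((Multiset.range N).map (fun i => s ^ i)).map (fun x => Q * x) := by
    rw [Multiset.map_map]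
    refine Multiset.map_congr rfl fun i _ => ?_
    simp only [Function.comp_apply]
    exact hRHSelts i
  rw [hmap, esymm_scale, ← hcore]
  -- final scalar bookkeeping
  have hQq : Q = q ^ (N - 1) := by
    rw [hQ, hq, ← Complex.exp_nat_mul]
    congr 1
    have hN1 : ((N - 1 : ℕ) : ℂ) = (N : ℂ) - 1 := by
      have h1 : 1 ≤ N := le_trans one_le_two hN
      push_cast [h1]
      ring
    rw [hN1]
    ring
  have heven : 2 * (k * (k - 1) / 2) = k * (k - 1) := by
    have he : Even (k * (k - 1)) := by
      cases k with
      | zero => simp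
      | succ j =>
        rw [Nat.add_sub_cancel]
        simpa [Nat.mul_comm] using Nat.even_mul_succ_self j
    rw [Nat.mul_comm]
    exact Nat.div_two_mul_two_of_even he
  have hsq : s ^ (k * (k - 1) / 2) * q ^ (k * (k - 1)) = 1 := by
    rw [hs, ← pow_mul, heven, ← mul_pow, mul_comm p q, hqp, one_pow]
  have hexp2 : (N - 1) * k = k * (N - k) + k * (k - 1) := by
    have h : N - 1 = (N - k) + (k - 1) := by omega
    rw [h, Nat.add_mul, Nat.mul_comm (N - k) k, Nat.mul_comm (k - 1) k]
  rw [hQq, ← pow_mul, hexp2, pow_add]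
  set T := ∑ I ∈ Finset.powersetCard k (Finset.univ : Finset (Fin N)),
    ∏ m ∈ I, ∏ n ∈ Finset.univ \ I, rr s w m n with hT
  linear_combination (-(q ^ (k * (N - k)) * T)) * hsq
end
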